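/- Let E be an exponentially distributed random variable with rate λ > 0 and let T > 0. Then E[min(E, T)²] / (2 E[min(E, T)]) = 1/λ - T/(e^{λT} - 1). -/

import Mathlib

open MeasureTheory ProbabilityTheory Real Set Filter Topology
open scoped NNReal ENNReal

lemma exponentialPDFReal_eq' (r x : ℝ) :
    exponentialPDFReal r x = if 0 ≤ x then r * Real.exp (-(r * x)) else 0 := by
  rw [exponentialPDFReal, gammaPDFReal]
  simp only [rpow_one, Real.Gamma_one, div_one, sub_self, rpow_zero, mul_one]

lemma exp_deriv_aux (lam : ℝ) (x : ℝ) :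
    HasDerivAt (fun y : ℝ => Real.exp (-(lam * y))) (Real.exp (-(lam * x)) * (-lam)) x := by
  have h1 : HasDerivAt (fun y : ℝ => -(lam * y)) (-lam) x := by
    simpa using ((hasDerivAt_id x).const_mul lam).fun_neg
  exact h1.exp

lemma tail_integral (lam : ℝ) (hlam : 0 < lam) (T : ℝ) :
    ∫ x in Ioi T, lam * Real.exp (-(lam * x)) = Real.exp (-(lam * T)) := by
  have hint : IntegrableOn (fun x => lam * Real.exp (-(lam * x))) (Ioi T) := by
    have := (exp_neg_integrableOn_Ioi T hlam).const_mul lam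
    simpa [neg_mul, IntegrableOn] using this
  have hderiv : ∀ x ∈ Ioi T,
      HasDerivAt (fun y : ℝ => -Real.exp (-(lam * y))) (lam * Real.exp (-(lam * x))) x := by
    intro x _
    have := (exp_deriv_aux lam x).fun_neg
    refine this.congr_deriv ?_
    ring
  have htend : Tendsto (fun y : ℝ => -Real.exp (-(lam * y))) atTop (𝓝 0) := by
    rw [← neg_zero]
    refine Tendsto.neg ?_
    have h2 : Tendsto (fun y : ℝ => -(lam * y)) atTop atBot := by
      have := tendsto_neg_atTop_atBot.comp (tendsto_id.const_mul_atTop hlam)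
      exact this
    exact Real.tendsto_exp_atBot.comp h2
  have hcont : ContinuousWithinAt (fun y : ℝ => -Real.exp (-(lam * y))) (Ici T) T :=
    (Continuous.continuousWithinAt (by fun_prop))
  have := integral_Ioi_of_hasDerivAt_of_tendsto hcont hderiv hint htend
  rw [this]
  simp

lemma integral_exp_density (lam : ℝ) (hlam : 0 < lam) (f : ℝ → ℝ) :
    ∫ x, f x ∂(volume.withDensity (exponentialPDF lam))
      = ∫ x in Ioi 0, f x * (lam * Real.exp (-(lam * x))) := by
  have hd : exponentialPDF lam
      = fun x => ((Real.toNNReal (exponentialPDFReal lam x) : ℝ≥0) : ℝ≥0∞) := rfl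
  rw [hd, integral_withDensity_eq_integral_smul
    ((measurable_exponentialPDFReal lam).real_toNNReal) f]
  have key : ∀ x : ℝ, (Real.toNNReal (exponentialPDFReal lam x) : ℝ≥0) • f x
      = (if 0 ≤ x then lam * Real.exp (-(lam * x)) else 0) * f x := by
    intro x
    rw [NNReal.smul_def, Real.coe_toNNReal _ (exponentialPDFReal_nonneg hlam x),
      exponentialPDFReal_eq', smul_eq_mul]
  simp_rw [key]
  rw [← setIntegral_eq_integral_of_forall_compl_eq_zero (s := Ici (0:ℝ))
    (f := fun x => (if 0 ≤ x then lam * Real.exp (-(lam * x)) else 0) * f x)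
    (fun x hx => by
      have hx' : ¬ (0 ≤ x) := by simpa using hx
      simp [hx'])]
  rw [integral_Ici_eq_integral_Ioi]
  refine setIntegral_congr_fun measurableSet_Ioi fun x hx => ?_
  rw [if_pos (le_of_lt hx)]
  ring

lemma min_pow_integral (lam : ℝ) (hlam : 0 < lam) (T : ℝ) (hT : 0 < T) (k : ℕ)
    (F : ℝ → ℝ) (hF : ∀ x, HasDerivAt F (x ^ k * (lam * Real.exp (-(lam * x)))) x) :
    ∫ x in Ioi 0, min x T ^ k * (lam * Real.exp (-(lam * x)))
      = (F T - F 0) + T ^ k * Real.exp (-(lam * T)) := by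
  have hi1 : IntegrableOn (fun x => min x T ^ k * (lam * Real.exp (-(lam * x)))) (Ioc 0 T) :=
    Continuous.integrableOn_Ioc (by fun_prop)
  have hi2 : IntegrableOn (fun x => min x T ^ k * (lam * Real.exp (-(lam * x)))) (Ioi T) := by
    have hbase : IntegrableOn (fun x => T ^ k * (lam * Real.exp (-(lam * x)))) (Ioi T) := by
      have := ((exp_neg_integrableOn_Ioi T hlam).const_mul lam).const_mul (T ^ k)
      simpa [neg_mul, mul_assoc, IntegrableOn] using this
    exact hbase.congr_fun (fun x hx => by rw [min_eq_right (le_of_lt hx)]) measurableSet_Ioi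
  have hsplit : Ioc (0:ℝ) T ∪ Ioi T = Ioi 0 := Ioc_union_Ioi_eq_Ioi hT.le
  rw [← hsplit, setIntegral_union (Ioc_disjoint_Ioi le_rfl) measurableSet_Ioi hi1 hi2]
  have h1 : ∫ x in Ioc (0:ℝ) T, min x T ^ k * (lam * Real.exp (-(lam * x))) = F T - F 0 := by
    rw [← intervalIntegral.integral_of_le hT.le]
    rw [show (∫ x in (0:ℝ)..T, min x T ^ k * (lam * Real.exp (-(lam * x))))
        = ∫ x in (0:ℝ)..T, x ^ k * (lam * Real.exp (-(lam * x))) from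
      intervalIntegral.integral_congr (fun x hx => by
        rw [uIcc_of_le hT.le] at hx
        rw [min_eq_left hx.2])]
    exact intervalIntegral.integral_eq_sub_of_hasDerivAt (fun x _ => hF x)
      ((Continuous.intervalIntegrable (by fun_prop) 0 T))
  have h2 : ∫ x in Ioi T, min x T ^ k * (lam * Real.exp (-(lam * x)))
      = T ^ k * Real.exp (-(lam * T)) := by
    rw [setIntegral_congr_fun measurableSet_Ioi
      (g := fun x => T ^ k * (lam * Real.exp (-(lam * x))))
      (fun x hx => by rw [min_eq_right (le_of_lt hx)]),
      integral_const_mul, tail_integral lam hlam T]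
  rw [h1, h2]

/-- For `E ~ Exp(λ)` and `T > 0`, the mean residual time of `min(E, T)` is
`E[min(E,T)²]/(2 E[min(E,T)]) = 1/λ - T/(e^{λT} - 1)`. -/
theorem stmt_4 {Ω : Type*} [MeasurableSpace Ω] (μ : Measure Ω) [IsProbabilityMeasure μ]
    (X : Ω → ℝ) (hX : Measurable X) (lam : ℝ) (hlam : 0 < lam)
    (hlaw : Measure.map X μ = volume.withDensity (exponentialPDF lam))
    (T : ℝ) (hT : 0 < T) :
    (∫ ω, (min (X ω) T) ^ 2 ∂μ) / (2 * ∫ ω, min (X ω) T ∂μ)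
      = 1 / lam - T / (Real.exp (lam * T) - 1) := by
  have hmap : ∀ (g : ℝ → ℝ), Continuous g →
      ∫ ω, g (X ω) ∂μ = ∫ x, g x ∂(volume.withDensity (exponentialPDF lam)) := by
    intro g hg
    rw [← hlaw, integral_map hX.aemeasurable hg.aestronglyMeasurable]
  have hI1 : ∫ ω, min (X ω) T ∂μ = (1 - Real.exp (-(lam * T))) / lam := by
    have hm := hmap (fun x => min x T) (by fun_prop)
    rw [hm, integral_exp_density lam hlam]
    have hF : ∀ x : ℝ, HasDerivAt (fun y : ℝ => -(y + 1/lam) * Real.exp (-(lam * y)))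
        (x ^ 1 * (lam * Real.exp (-(lam * x)))) x := by
      intro x
      have hp : HasDerivAt (fun y : ℝ => -(y + 1/lam)) (-1) x := by
        simpa using ((hasDerivAt_id x).add_const (1/lam)).fun_neg
      have := hp.fun_mul (exp_deriv_aux lam x)
      refine this.congr_deriv ?_
      field_simp
      ring
    have hv := min_pow_integral lam hlam T hT 1 _ hF
    simp only [pow_one] at hv ⊢
    rw [hv]
    simp only [mul_zero, neg_zero, Real.exp_zero]
    field_simp
    ring
  have hI2 : ∫ ω, min (X ω) T ^ 2 ∂μ
      = 2 * (1 - Real.exp (-(lam * T))) / lam ^ 2 - 2 * T * Real.exp (-(lam * T)) / lam := by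
    have hm := hmap (fun x => min x T ^ 2) (by fun_prop)
    rw [hm, integral_exp_density lam hlam]
    have hF : ∀ x : ℝ, HasDerivAt
        (fun y : ℝ => -(y^2 + 2*y/lam + 2/lam^2) * Real.exp (-(lam * y)))
        (x ^ 2 * (lam * Real.exp (-(lam * x)))) x := by
      intro x
      have hp : HasDerivAt (fun y : ℝ => -(y^2 + 2*y/lam + 2/lam^2)) (-(2*x + 2/lam)) x := by
        have h1 : HasDerivAt (fun y : ℝ => y^2 + 2*y/lam + 2/lam^2) (2*x + 2/lam) x := by
          have h : HasDerivAt (fun y : ℝ => y^2 + 2*y/lam + 2/lam^2)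
              ((2:ℕ) * x ^ (2-1) + 2 * 1 / lam + 0) x :=
            ((hasDerivAt_pow 2 x).add
              (((hasDerivAt_id x).const_mul 2).div_const lam)).add (hasDerivAt_const x _)
          simpa using h
        exact h1.fun_neg
      have := hp.fun_mul (exp_deriv_aux lam x)
      refine this.congr_deriv ?_
      field_simp
      ring
    have hv := min_pow_integral lam hlam T hT 2 _ hF
    rw [hv]
    simp only [mul_zero, neg_zero, Real.exp_zero]
    field_simp
    ring
  rw [hI1, hI2]
  have hE : Real.exp (-(lam * T)) = (Real.exp (lam * T))⁻¹ := Real.exp_neg _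
  have hEpos : 1 < Real.exp (lam * T) := by
    have := Real.exp_lt_exp.2 (show (0:ℝ) < lam * T by positivity)
    simpa using this
  have hE1 : Real.exp (lam * T) - 1 ≠ 0 := by linarith
  have hEne : Real.exp (lam * T) ≠ 0 := (Real.exp_pos _).ne'
  have h1a : 1 - (Real.exp (lam * T))⁻¹ ≠ 0 := by
    have : (Real.exp (lam * T))⁻¹ < 1 := by
      rw [inv_lt_one_iff₀]; right; exact hEpos
    linarith
  rw [hE]
  field_simp
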